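/- arXiv:2507.08444 — 2 statements merged into one kernel-verified Lean document; each statement's English description precedes it below -/
import Mathlib

section
/- Let d ≥ 1 be an integer and let h ∈ ℝ^d satisfy ‖h‖₂ < √3/(2d). Then for every v ∈ ℝ^d, −Σ_{i=1}^{d} Σ_{j=1}^{d} v_i·v_j·(∂_i∂_j Ψ₁)(h) ≥ (23/384)·‖v‖₂², where ∂_i∂_j Ψ₁ denotes the second-order partial derivatives of Ψ₁(u) = ∏_{i=1}^{d} sinc(u_i/4)⁴. -/
/-- The cardinal sine function: `sinc z = sin z / z` for `z ≠ 0`, `sinc 0 = 1`. -/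
noncomputable def sinc (x : ℝ) : ℝ := if x = 0 then 1 else Real.sin x / x

/-- The sinc-4 kernel (bandwidth one) on `ℝ^d`. -/
noncomputable def Psi1 (d : ℕ) (u : EuclideanSpace ℝ (Fin d)) : ℝ :=
  ∏ i, sinc (u i / 4) ^ 4

open Real hiding sinc sinc_neg sinc_le_one
open Filter Topology

/-- First derivative of `sinc`. -/
noncomputable def sincD (x : ℝ) : ℝ :=
  if x = 0 then 0 else (x * Real.cos x - Real.sin x) / x ^ 2

/-- Second derivative of `sinc`. -/
noncomputable def sincDD (x : ℝ) : ℝ :=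
  if x = 0 then -(1/3) else
    (2 * Real.sin x - 2 * x * Real.cos x - x ^ 2 * Real.sin x) / x ^ 3

lemma abs_le_one_eventually : ∀ᶠ y in 𝓝[≠] (0:ℝ), |y| ≤ 1 := by
  have : ∀ᶠ y in 𝓝 (0:ℝ), |y| ≤ 1 := by
    filter_upwards [Metric.ball_mem_nhds (0:ℝ) one_pos] with y hy
    have := mem_ball_zero_iff.mp hy
    simpa [Real.norm_eq_abs] using this.le
  exact this.filter_mono nhdsWithin_le_nhds

lemma hasDerivAt_sinc (x : ℝ) : HasDerivAt sinc (sincD x) x := by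
  rcases eq_or_ne x 0 with rfl | hx
  · rw [hasDerivAt_iff_tendsto_slope]
    have hb : ∀ᶠ y in 𝓝[≠] (0:ℝ), ‖slope sinc 0 y‖ ≤ |y| := by
      filter_upwards [abs_le_one_eventually, self_mem_nhdsWithin] with y hy1 hy0
      have hy0' : y ≠ 0 := hy0
      have hs := Real.sin_bound hy1
      rw [slope_def_field, sinc, sinc, if_neg hy0', if_pos rfl]
      have : (Real.sin y / y - 1) / (y - 0) = (Real.sin y - y) / y ^ 2 := by
        rw [sub_zero, div_sub_one hy0', div_div, sq]
      rw [this, Real.norm_eq_abs, abs_div, abs_pow]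
      rw [div_le_iff₀ (by positivity)]
      have h1 : |Real.sin y - y| ≤ |y|^3/6 + |y|^4 * (5/96) := by
        have e1 : Real.sin y - y = (Real.sin y - (y - y^3/6)) + (-(y^3/6)) := by ring
        calc |Real.sin y - y| = |(Real.sin y - (y - y^3/6)) + (-(y^3/6))| := by rw [← e1]
          _ ≤ |Real.sin y - (y - y^3/6)| + |(-(y^3/6))| := abs_add_le _ _
          _ ≤ |y|^4 * (5/96) + |y|^3/6 := by
              have e2 : |(-(y^3/6))| = |y|^3/6 := by
                rw [abs_neg, abs_div, abs_pow]
                norm_num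
              rw [e2]
              linarith [hs, pow_le_pow_of_le_one (abs_nonneg y) hy1 (show 4 ≤ 5 by norm_num), pow_nonneg (abs_nonneg y) 4]
          _ = |y|^3/6 + |y|^4 * (5/96) := by ring
      have h2 : |y|^3 ≤ |y| * |y|^2 := by ring_nf; exact le_refl _
      have h3 : |y|^4 ≤ |y| * |y|^2 := by
        have : |y|^4 = |y|^2 * |y|^2 := by ring
        rw [this]
        have : |y|^2 ≤ |y| := by
          nlinarith [abs_nonneg y]
        nlinarith [sq_nonneg (|y|), abs_nonneg y]
      calc |Real.sin y - y| ≤ |y|^3/6 + |y|^4 * (5/96) := h1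
        _ ≤ |y| * |y|^2 * (1/6) + |y| * |y|^2 * (5/96) := by nlinarith
        _ ≤ |y| * |y|^2 := by nlinarith [abs_nonneg y, sq_nonneg (|y|)]
    have : Tendsto (fun y : ℝ => |y|) (𝓝[≠] 0) (𝓝 0) := by
      have := (continuous_abs.tendsto (0:ℝ)).mono_left (nhdsWithin_le_nhds (s := {(0:ℝ)}ᶜ))
      simpa using this
    have := squeeze_zero_norm' hb this
    simpa [sincD] using this
  · have hev : (fun y => Real.sin y / y) =ᶠ[𝓝 x] sinc := by
      filter_upwards [isOpen_compl_singleton.mem_nhds (by simpa using hx : x ∈ ({(0:ℝ)}ᶜ))] with y hy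
      simp [sinc, if_neg (by simpa using hy : y ≠ (0:ℝ))]
    have hd : HasDerivAt (fun y => Real.sin y / y)
        ((Real.cos x * x - Real.sin x * 1) / x ^ 2) x :=
      (Real.hasDerivAt_sin x).div (hasDerivAt_id x) hx
    have : HasDerivAt sinc ((Real.cos x * x - Real.sin x * 1) / x ^ 2) x :=
      hd.congr_of_eventuallyEq hev.symm
    convert this using 1
    rw [sincD, if_neg hx]; ring

lemma hasDerivAt_sincD (x : ℝ) : HasDerivAt sincD (sincDD x) x := by
  rcases eq_or_ne x 0 with rfl | hx
  · rw [hasDerivAt_iff_tendsto_slope]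
    rw [← tendsto_sub_nhds_zero_iff]
    have hb : ∀ᶠ y in 𝓝[≠] (0:ℝ), ‖slope sincD 0 y - (-(1/3))‖ ≤ |y| := by
      filter_upwards [abs_le_one_eventually, self_mem_nhdsWithin] with y hy1 hy0
      have hy0' : y ≠ 0 := hy0
      have hs := Real.sin_bound hy1
      have hc := Real.cos_bound hy1
      rw [slope_def_field, sincD, sincD, if_neg hy0', if_pos rfl]
      have e1 : ((y * Real.cos y - Real.sin y) / y ^ 2 - 0) / (y - 0) - (-(1/3))
          = (y * Real.cos y - Real.sin y + y^3/3) / y ^ 3 := by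
        field_simp
        ring
      rw [e1, Real.norm_eq_abs, abs_div, abs_pow]
      rw [div_le_iff₀ (by positivity)]
      have e2 : y * Real.cos y - Real.sin y + y^3/3
          = y * (Real.cos y - (1 - y^2/2)) - (Real.sin y - (y - y^3/6)) := by ring
      have h1 : |y * Real.cos y - Real.sin y + y^3/3| ≤ |y| * (|y|^4 * (5/96)) + |y|^4 * (5/96) := by
        rw [e2]
        calc |y * (Real.cos y - (1 - y^2/2)) - (Real.sin y - (y - y^3/6))|
            ≤ |y * (Real.cos y - (1 - y^2/2))| + |Real.sin y - (y - y^3/6)| := abs_sub _ _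
          _ ≤ |y| * (|y|^4 * (5/96)) + |y|^4 * (5/96) := by
              rw [abs_mul]
              gcongr
              exact hs.trans (by linarith [pow_le_pow_of_le_one (abs_nonneg y) hy1 (show 4 ≤ 5 by norm_num), pow_nonneg (abs_nonneg y) 4])
      have h4 : |y|^4 ≤ |y|^3 := pow_le_pow_of_le_one (abs_nonneg y) hy1 (by norm_num)
      have h45 : |y|^5 ≤ |y|^4 := pow_le_pow_of_le_one (abs_nonneg y) hy1 (by norm_num)
      have h5 : |y| * (|y|^4 * (5/96)) ≤ |y|^4 * (5/96) := by nlinarith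
      calc |y * Real.cos y - Real.sin y + y^3/3| ≤ |y| * (|y|^4 * (5/96)) + |y|^4 * (5/96) := h1
        _ ≤ |y|^4 * (5/96) + |y|^4 * (5/96) := by linarith
        _ = |y|^4 * (10/96) := by ring
        _ ≤ |y|^4 := by nlinarith [pow_nonneg (abs_nonneg y) 4]
        _ = |y| * |y|^3 := by ring
    have habs : Tendsto (fun y : ℝ => |y|) (𝓝[≠] 0) (𝓝 0) := by
      have := (continuous_abs.tendsto (0:ℝ)).mono_left (nhdsWithin_le_nhds (s := {(0:ℝ)}ᶜ))
      simpa using this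
    have := squeeze_zero_norm' hb habs
    simpa [sincDD] using this
  · have hev : (fun y => (y * Real.cos y - Real.sin y) / y ^ 2) =ᶠ[𝓝 x] sincD := by
      filter_upwards [isOpen_compl_singleton.mem_nhds (by simpa using hx : x ∈ ({(0:ℝ)}ᶜ))] with y hy
      simp [sincD, if_neg (by simpa using hy : y ≠ (0:ℝ))]
    have hnum : HasDerivAt (fun y => y * Real.cos y - Real.sin y)
        (1 * Real.cos x + x * (-Real.sin x) - Real.cos x) x :=
      ((hasDerivAt_id x).mul (Real.hasDerivAt_cos x)).sub (Real.hasDerivAt_sin x)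
    have hden : HasDerivAt (fun y : ℝ => y ^ 2) (2 * x ^ 1) x := by
      simpa using hasDerivAt_pow 2 x
    have hd : HasDerivAt (fun y => (y * Real.cos y - Real.sin y) / y ^ 2)
        (((1 * Real.cos x + x * (-Real.sin x) - Real.cos x) * x ^ 2
          - (x * Real.cos x - Real.sin x) * (2 * x ^ 1)) / (x ^ 2) ^ 2) x :=
      hnum.div hden (pow_ne_zero 2 hx)
    have : HasDerivAt sincD _ x := hd.congr_of_eventuallyEq hev.symm
    convert this using 1
    rw [sincDD, if_neg hx]
    field_simp
    ring

lemma sinc_neg (x : ℝ) : sinc (-x) = sinc x := by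
  rcases eq_or_ne x 0 with rfl | hx
  · norm_num
  · rw [sinc, sinc, if_neg (neg_ne_zero.mpr hx), if_neg hx, Real.sin_neg, neg_div_neg_eq]

lemma sincDD_neg (x : ℝ) : sincDD (-x) = sincDD x := by
  rcases eq_or_ne x 0 with rfl | hx
  · norm_num
  · rw [sincDD, sincDD, if_neg (neg_ne_zero.mpr hx), if_neg hx, Real.sin_neg, Real.cos_neg]
    rw [div_eq_div_iff (pow_ne_zero 3 (neg_ne_zero.mpr hx)) (pow_ne_zero 3 hx)]
    ring

lemma sinc_le_one (x : ℝ) : sinc x ≤ 1 := by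
  have key : ∀ y : ℝ, 0 < y → sinc y ≤ 1 := by
    intro y hy
    rw [sinc, if_neg hy.ne', div_le_one hy]
    exact Real.sin_le hy.le
  rcases lt_trichotomy x 0 with hx | rfl | hx
  · rw [← sinc_neg]
    exact key _ (by linarith)
  · simp [sinc]
  · exact key _ hx

lemma sinc_lower {x : ℝ} (hx : |x| ≤ 13/60) : 1 - (89/500) * x^2 ≤ sinc x := by
  have key : ∀ y : ℝ, 0 < y → y ≤ 13/60 → 1 - (89/500) * y^2 ≤ sinc y := by
    intro y hy hy'
    have hy1 : |y| ≤ 1 := by rw [abs_of_pos hy]; linarith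
    have hs := (abs_le.mp (Real.sin_bound hy1)).1
    rw [abs_of_pos hy] at hs
    rw [sinc, if_neg hy.ne', le_div_iff₀ hy]
    nlinarith [pow_pos hy 3, pow_pos hy 4, sq_nonneg y]
  rcases lt_trichotomy x 0 with hx0 | rfl | hx0
  · rw [← sinc_neg, ← neg_sq]
    rw [abs_of_neg hx0] at hx
    exact key _ (by linarith) hx
  · simp [sinc]
  · rw [abs_of_pos hx0] at hx
    exact key _ hx0 hx

lemma sinc_nonneg {x : ℝ} (hx : |x| ≤ 13/60) : 0 ≤ sinc x := by
  have := sinc_lower hx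
  have hx2 : x^2 ≤ (13/60)^2 := by
    rw [← sq_abs]
    exact pow_le_pow_left₀ (abs_nonneg x) hx 2
  nlinarith

lemma sincD_bound {x : ℝ} (hx : |x| ≤ 13/60) : |sincD x| ≤ (7/20) * |x| := by
  rcases eq_or_ne x 0 with rfl | hx0
  · simp [sincD]
  · have hx1 : |x| ≤ 1 := by linarith [hx]
    have hs := Real.sin_bound hx1
    have hc := Real.cos_bound hx1
    rw [sincD, if_neg hx0, abs_div, abs_pow, sq_abs]
    rw [div_le_iff₀ (by positivity)]
    have e2 : x * Real.cos x - Real.sin x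
        = x * (Real.cos x - (1 - x^2/2)) - (Real.sin x - (x - x^3/6)) - x^3/3 := by ring
    set a := |x| with ha
    have ha0 : 0 ≤ a := abs_nonneg x
    have h1 : |x * Real.cos x - Real.sin x| ≤ a * (a^4 * (5/96)) + a^4 * (5/96) + a^3/3 := by
      rw [e2]
      have t1 : |x * (Real.cos x - (1 - x^2/2)) - (Real.sin x - (x - x^3/6)) - x^3/3|
          ≤ |x * (Real.cos x - (1 - x^2/2))| + |Real.sin x - (x - x^3/6)| + |x^3/3| := by
        calc _ ≤ |x * (Real.cos x - (1 - x^2/2)) - (Real.sin x - (x - x^3/6))| + |x^3/3| :=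
              abs_sub _ _
          _ ≤ _ := by
              have := abs_sub (x * (Real.cos x - (1 - x^2/2))) (Real.sin x - (x - x^3/6))
              linarith
      have t2 : |x * (Real.cos x - (1 - x^2/2))| ≤ a * (a^4 * (5/96)) := by
        rw [abs_mul]; gcongr
      have t3 : |x^3/3| = a^3/3 := by
        rw [abs_div, abs_pow]; norm_num; rw [ha]
      calc |x * (Real.cos x - (1 - x^2/2)) - (Real.sin x - (x - x^3/6)) - x^3/3|
          ≤ |x * (Real.cos x - (1 - x^2/2))| + |Real.sin x - (x - x^3/6)| + |x^3/3| := t1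
        _ ≤ a * (a^4 * (5/96)) + a^4 * (5/96) + a^3/3 := by
            rw [t3]; gcongr
            exact hs.trans (by linarith [pow_le_pow_of_le_one ha0 hx1 (show 4 ≤ 5 by norm_num), pow_nonneg ha0 4])
    have key : a * (a^4 * (5/96)) + a^4 * (5/96) + a^3/3 ≤ 7/20 * a * a^2 := by
      nlinarith [pow_nonneg ha0 2, pow_nonneg ha0 3, pow_nonneg ha0 4, sq_nonneg a]
    calc |x * Real.cos x - Real.sin x| ≤ a * (a^4 * (5/96)) + a^4 * (5/96) + a^3/3 := h1
      _ ≤ 7/20 * a * a^2 := key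
      _ = 7/20 * a * x^2 := by rw [ha, sq_abs]

lemma sincDD_bound {x : ℝ} (hx : |x| ≤ 13/60) : sincDD x ≤ -(297/1000) := by
  have key : ∀ y : ℝ, 0 < y → y ≤ 13/60 → sincDD y ≤ -(297/1000) := by
    intro y hy hy'
    have hy1 : |y| ≤ 1 := by rw [abs_of_pos hy]; linarith
    have hs := abs_le.mp (Real.sin_bound hy1)
    have hc := abs_le.mp (Real.cos_bound hy1)
    rw [abs_of_pos hy] at hs hc
    rw [sincDD, if_neg hy.ne', div_le_iff₀ (by positivity)]
    have hsu : Real.sin y ≤ (y - y^3/6) + y^4 * (5/96) := by linarith [hs.2, pow_le_pow_of_le_one hy.le (by linarith : y ≤ 1) (show 4 ≤ 5 by norm_num), pow_pos hy 4]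
    have hsl : (y - y^3/6) - y^4 * (5/96) ≤ Real.sin y := by linarith [hs.1, pow_le_pow_of_le_one hy.le (by linarith : y ≤ 1) (show 4 ≤ 5 by norm_num), pow_pos hy 4]
    have hcl : (1 - y^2/2) - y^4 * (5/96) ≤ Real.cos y := by linarith [hc.1]
    have hy2 : y^2 ≤ (13/60)^2 := by nlinarith
    have hcoef : (0:ℝ) < 2 - y^2 := by nlinarith
    calc 2 * Real.sin y - 2 * y * Real.cos y - y ^ 2 * Real.sin y
        = (2 - y^2) * Real.sin y - 2 * y * Real.cos y := by ring
      _ ≤ (2 - y^2) * ((y - y^3/6) + y^4 * (5/96))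
          - 2 * y * ((1 - y^2/2) - y^4 * (5/96)) := by
          have t1 : (2 - y^2) * Real.sin y ≤ (2 - y^2) * ((y - y^3/6) + y^4 * (5/96)) :=
            mul_le_mul_of_nonneg_left hsu hcoef.le
          have t2 : 2 * y * ((1 - y^2/2) - y^4 * (5/96)) ≤ 2 * y * Real.cos y :=
            mul_le_mul_of_nonneg_left hcl (by linarith)
          linarith
      _ ≤ -(297/1000) * y ^ 3 := by nlinarith [pow_pos hy 3, pow_pos hy 4, pow_pos hy 5]
  rcases lt_trichotomy x 0 with hx0 | rfl | hx0
  · rw [← sincDD_neg]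
    rw [abs_of_neg hx0] at hx
    exact key _ (by linarith) hx
  · rw [sincDD]; norm_num
  · rw [abs_of_pos hx0] at hx
    exact key _ hx0 hx

/-! ### The one-variable factor `phi` -/

noncomputable def phi (t : ℝ) : ℝ := sinc (t/4) ^ 4
noncomputable def phiD (t : ℝ) : ℝ := sinc (t/4) ^ 3 * sincD (t/4)
noncomputable def phiDD (t : ℝ) : ℝ :=
  (3 * sinc (t/4)^2 * sincD (t/4)^2 + sinc (t/4)^3 * sincDD (t/4)) / 4

lemma hasDerivAt_quarter (t : ℝ) : HasDerivAt (fun s : ℝ => s/4) (1/4) t := by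
  simpa using (hasDerivAt_id t).div_const 4

lemma hasDerivAt_sinc_quarter (t : ℝ) :
    HasDerivAt (fun s : ℝ => sinc (s/4)) (sincD (t/4) * (1/4)) t :=
  (hasDerivAt_sinc (t/4)).comp (h₂ := sinc) t (hasDerivAt_quarter t)

lemma hasDerivAt_phi (t : ℝ) : HasDerivAt phi (phiD t) t := by
  have := (hasDerivAt_sinc_quarter t).fun_pow 4
  refine this.congr_deriv ?_
  rw [phiD]; push_cast; ring

lemma hasDerivAt_phiD (t : ℝ) : HasDerivAt phiD (phiDD t) t := by
  have h1 := (hasDerivAt_sinc_quarter t).fun_pow 3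
  have h2 : HasDerivAt (fun s : ℝ => sincD (s/4)) (sincDD (t/4) * (1/4)) t :=
    (hasDerivAt_sincD (t/4)).comp (h₂ := sincD) t (hasDerivAt_quarter t)
  have := h1.fun_mul h2
  refine this.congr_deriv ?_
  rw [phiDD]; push_cast; ring

/-! ### Bounds on `phi` and its derivatives for `|t| ≤ 13/15` -/

lemma phi_nonneg (t : ℝ) : 0 ≤ phi t := by rw [phi]; positivity

lemma phi_le_one {t : ℝ} (ht : |t| ≤ 13/15) : phi t ≤ 1 := by
  have hx : |t/4| ≤ 13/60 := by rw [abs_div]; norm_num; linarith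
  have h1 := sinc_le_one (t/4)
  have h0 := sinc_nonneg hx
  rw [phi]
  calc sinc (t/4)^4 ≤ 1^4 := pow_le_pow_left₀ h0 h1 4
    _ = 1 := one_pow 4

lemma phi_lower {t : ℝ} (ht : |t| ≤ 13/15) : 1 - (89/125) * (t/4)^2 ≤ phi t := by
  have hx : |t/4| ≤ 13/60 := by rw [abs_div]; norm_num; linarith
  have h1 := sinc_lower hx
  have hx2 : (t/4)^2 ≤ (13/60)^2 := by
    rw [← sq_abs]; exact pow_le_pow_left₀ (abs_nonneg _) hx 2
  have hb0 : 0 ≤ 1 - (89/500) * (t/4)^2 := by nlinarith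
  have h2 : (1 - (89/500) * (t/4)^2)^4 ≤ sinc (t/4)^4 := pow_le_pow_left₀ hb0 h1 4
  have h3 : 1 + 4 * (-(89/500) * (t/4)^2) ≤ (1 + (-(89/500) * (t/4)^2))^4 := by
    have := one_add_mul_le_pow (a := -(89/500) * (t/4)^2) (by nlinarith) 4
    simpa using this
  rw [phi]
  have e : (1 + (-(89/500) * (t/4)^2)) = (1 - (89/500) * (t/4)^2) := by ring
  rw [e] at h3
  nlinarith

lemma phiD_bound {t : ℝ} (ht : |t| ≤ 13/15) : |phiD t| ≤ (7/80) * |t| := by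
  have hx : |t/4| ≤ 13/60 := by rw [abs_div]; norm_num; linarith
  have h1 := sinc_le_one (t/4)
  have h0 := sinc_nonneg hx
  have hD := sincD_bound hx
  rw [phiD, abs_mul, abs_pow]
  have hs3 : |sinc (t/4)|^3 ≤ 1 := by
    rw [abs_of_nonneg h0]
    calc sinc (t/4)^3 ≤ 1^3 := pow_le_pow_left₀ h0 h1 3
      _ = 1 := one_pow 3
  calc |sinc (t/4)|^3 * |sincD (t/4)| ≤ 1 * ((7/20) * |t/4|) := by
        apply mul_le_mul hs3 hD (abs_nonneg _) zero_le_one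
    _ = (7/80) * |t| := by rw [abs_div]; norm_num; ring
  
lemma phiDD_key (s D DD x : ℝ) (h1 : s ≤ 1) (h0 : 0 ≤ s)
    (hlow : 1 - (89/500) * x^2 ≤ s) (hD2 : D^2 ≤ (49/400) * x^2)
    (hDD : DD ≤ -(297/1000)) (hx2 : x^2 ≤ 169/3600) :
    (3 * s^2 * D^2 + s^3 * DD) / 4 ≤ -(1089/16000) := by
  have hb0 : (0:ℝ) ≤ 1 - (89/500) * x^2 := by nlinarith [sq_nonneg x]
  have hs3b : (1 - (89/500) * x^2)^3 ≤ s^3 := pow_le_pow_left₀ hb0 hlow 3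
  have hb3 : 1 - 3 * ((89/500) * x^2) ≤ (1 - (89/500) * x^2)^3 := by
    nlinarith [sq_nonneg x, sq_nonneg ((89/500) * x^2)]
  have hs2 : s^2 ≤ 1 := by nlinarith
  have ht1 : 3 * s^2 * D^2 ≤ 3 * ((49/400) * x^2) := by
    have : s^2 * D^2 ≤ D^2 := by nlinarith [sq_nonneg D]
    linarith
  have hs3pos : 0 ≤ s^3 := by positivity
  have ht2 : s^3 * DD ≤ (1 - 3 * ((89/500) * x^2)) * (-(297/1000)) := by
    have e1 : s^3 * DD ≤ s^3 * (-(297/1000)) := mul_le_mul_of_nonneg_left hDD hs3pos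
    have e2 : s^3 * (-(297/1000)) ≤ (1 - 3 * ((89/500) * x^2)) * (-(297/1000)) := by
      have : 1 - 3 * ((89/500) * x^2) ≤ s^3 := le_trans hb3 hs3b
      linarith
    linarith
  have : 3 * s^2 * D^2 + s^3 * DD
      ≤ 3 * ((49/400) * x^2) + (1 - 3 * ((89/500) * x^2)) * (-(297/1000)) := by linarith
  nlinarith [hx2, sq_nonneg x]

lemma phiDD_bound {t : ℝ} (ht : |t| ≤ 13/15) : phiDD t ≤ -(1089/16000) := by
  have hx : |t/4| ≤ 13/60 := by rw [abs_div]; norm_num; linarith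
  have hx2 : (t/4)^2 ≤ 169/3600 := by
    rw [← sq_abs]; nlinarith [abs_nonneg (t/4)]
  have hD2 : sincD (t/4) ^ 2 ≤ (49/400) * (t/4)^2 := by
    have h := sincD_bound hx
    nlinarith [abs_nonneg (sincD (t/4)), abs_nonneg (t/4), sq_abs (sincD (t/4)), sq_abs (t/4)]
  exact phiDD_key _ _ _ _ (sinc_le_one _) (sinc_nonneg hx) (sinc_lower hx) hD2
    (sincDD_bound hx) hx2

/-! ### Multivariable: Hessian of `Psi1` -/

open Finset in
lemma hasFDerivAt_prod_gen {d : ℕ} (f f' : Fin d → ℝ → ℝ)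
    (hf : ∀ j x, HasDerivAt (f j) (f' j x) x) (u : EuclideanSpace ℝ (Fin d)) :
    HasFDerivAt (fun w : EuclideanSpace ℝ (Fin d) => ∏ j, f j (w j))
      (∑ j, (f' j (u j) * ∏ k ∈ Finset.univ.erase j, f k (u k)) •
        (EuclideanSpace.proj j : EuclideanSpace ℝ (Fin d) →L[ℝ] ℝ)) u := by
  have each : ∀ j : Fin d, HasFDerivAt (fun w : EuclideanSpace ℝ (Fin d) => f j (w j))
      ((f' j (u j)) • (EuclideanSpace.proj j : EuclideanSpace ℝ (Fin d) →L[ℝ] ℝ)) u := by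
    intro j
    have hp : HasFDerivAt (fun w : EuclideanSpace ℝ (Fin d) => w j)
        (EuclideanSpace.proj j : EuclideanSpace ℝ (Fin d) →L[ℝ] ℝ) u :=
      (EuclideanSpace.proj j : EuclideanSpace ℝ (Fin d) →L[ℝ] ℝ).hasFDerivAt
    exact (hf j (u j)).comp_hasFDerivAt u hp
  have H := HasFDerivAt.finset_prod (u := Finset.univ)
    (g := fun j (w : EuclideanSpace ℝ (Fin d)) => f j (w j))
    (g' := fun j => (f' j (u j)) • (EuclideanSpace.proj j : EuclideanSpace ℝ (Fin d) →L[ℝ] ℝ))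
    (fun j _ => each j)
  refine H.congr_fderiv ?_
  refine Finset.sum_congr rfl fun j _ => ?_
  rw [smul_smul, mul_comm]

noncomputable def gradPsi (d : ℕ) (u : EuclideanSpace ℝ (Fin d)) :
    EuclideanSpace ℝ (Fin d) →L[ℝ] ℝ :=
  ∑ j, (phiD (u j) * ∏ k ∈ Finset.univ.erase j, phi (u k)) •
    (EuclideanSpace.proj j : EuclideanSpace ℝ (Fin d) →L[ℝ] ℝ)

lemma hasFDerivAt_Psi1 (d : ℕ) (u : EuclideanSpace ℝ (Fin d)) :
    HasFDerivAt (Psi1 d) (gradPsi d u) u := by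
  have := hasFDerivAt_prod_gen (fun _ => phi) (fun _ => phiD)
    (fun _ x => hasDerivAt_phi x) u
  exact this

/-- Entries of the Hessian of `Psi1`. -/
noncomputable def HessEnt (d : ℕ) (h : EuclideanSpace ℝ (Fin d)) (i j : Fin d) : ℝ :=
  (if i = j then phiDD (h i) else phiD (h i)) *
    ∏ k ∈ Finset.univ.erase i, (if k = j then phiD else phi) (h k)

noncomputable def hessCLM (d : ℕ) (h : EuclideanSpace ℝ (Fin d)) :
    EuclideanSpace ℝ (Fin d) →L[ℝ] EuclideanSpace ℝ (Fin d) →L[ℝ] ℝ :=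
  ∑ j, (∑ i, (HessEnt d h i j) •
      (EuclideanSpace.proj i : EuclideanSpace ℝ (Fin d) →L[ℝ] ℝ)).smulRight
    (EuclideanSpace.proj j : EuclideanSpace ℝ (Fin d) →L[ℝ] ℝ)

open Finset in
lemma hasFDerivAt_gradPsi (d : ℕ) (h : EuclideanSpace ℝ (Fin d)) :
    HasFDerivAt (gradPsi d) (hessCLM d h) h := by
  apply HasFDerivAt.fun_sum
  intro j _
  have hc : HasFDerivAt
      (fun u : EuclideanSpace ℝ (Fin d) => phiD (u j) * ∏ k ∈ Finset.univ.erase j, phi (u k))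
      (∑ i, (HessEnt d h i j) •
        (EuclideanSpace.proj i : EuclideanSpace ℝ (Fin d) →L[ℝ] ℝ)) h := by
    have efun : (fun u : EuclideanSpace ℝ (Fin d) =>
        phiD (u j) * ∏ k ∈ Finset.univ.erase j, phi (u k))
        = fun u => ∏ k, (if k = j then phiD else phi) (u k) := by
      funext u
      rw [← Finset.mul_prod_erase Finset.univ (fun k => (if k = j then phiD else phi) (u k))
        (Finset.mem_univ j)]
      rw [if_pos rfl]
      congr 1
      refine Finset.prod_congr rfl fun k hk => ?_
      rw [if_neg (Finset.ne_of_mem_erase hk)]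
    rw [efun]
    have := hasFDerivAt_prod_gen (fun k => if k = j then phiD else phi)
      (fun k => if k = j then phiDD else phiD)
      (fun k x => by
        by_cases hkj : k = j
        · simp only [if_pos hkj]; exact hasDerivAt_phiD x
        · simp only [if_neg hkj]; exact hasDerivAt_phi x) h
    convert this using 2 with i
    rw [HessEnt]
    congr 1
    by_cases hij : i = j
    · rw [if_pos hij, if_pos hij]
    · rw [if_neg hij, if_neg hij]
  exact hc.smul_const (EuclideanSpace.proj j : EuclideanSpace ℝ (Fin d) →L[ℝ] ℝ)

open Finset in
lemma hessian_entry (d : ℕ) (h : EuclideanSpace ℝ (Fin d)) (i j : Fin d) :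
    iteratedFDeriv ℝ 2 (Psi1 d) h
      ![EuclideanSpace.single i (1 : ℝ), EuclideanSpace.single j (1 : ℝ)]
      = HessEnt d h i j := by
  rw [iteratedFDeriv_two_apply]
  have h1 : fderiv ℝ (Psi1 d) = gradPsi d := funext fun u => (hasFDerivAt_Psi1 d u).fderiv
  rw [h1, (hasFDerivAt_gradPsi d h).fderiv]
  show (hessCLM d h) (EuclideanSpace.single i (1 : ℝ)) (EuclideanSpace.single j (1 : ℝ))
      = HessEnt d h i j
  rw [hessCLM]
  rw [ContinuousLinearMap.sum_apply]
  rw [ContinuousLinearMap.sum_apply]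
  have : ∀ j' : Fin d,
      (((∑ i', (HessEnt d h i' j') •
        (EuclideanSpace.proj i' : EuclideanSpace ℝ (Fin d) →L[ℝ] ℝ)).smulRight
        (EuclideanSpace.proj j' : EuclideanSpace ℝ (Fin d) →L[ℝ] ℝ))
        (EuclideanSpace.single i (1 : ℝ))) (EuclideanSpace.single j (1 : ℝ))
      = (∑ i', HessEnt d h i' j' * (if i' = i then 1 else 0)) * (if j' = j then 1 else 0) := by
    intro j'
    rw [ContinuousLinearMap.smulRight_apply, ContinuousLinearMap.smul_apply]
    rw [ContinuousLinearMap.sum_apply]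
    simp only [ContinuousLinearMap.smul_apply, PiLp.proj_apply,
      EuclideanSpace.single_apply, smul_eq_mul]
  rw [Finset.sum_congr rfl (fun j' _ => this j')]
  simp [Finset.sum_ite_eq, Finset.sum_ite_eq']

open Finset in
lemma prod_one_sub_ge {ι : Type*} (s : Finset ι) (ε : ι → ℝ)
    (h0 : ∀ i ∈ s, 0 ≤ ε i) (h1 : ∀ i ∈ s, ε i ≤ 1) :
    1 - ∑ i ∈ s, ε i ≤ ∏ i ∈ s, (1 - ε i) := by
  induction s using Finset.cons_induction with
  | empty => simp
  | cons a s ha ih =>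
    rw [Finset.prod_cons, Finset.sum_cons]
    have h0' := fun i hi => h0 i (Finset.mem_cons_of_mem hi)
    have h1' := fun i hi => h1 i (Finset.mem_cons_of_mem hi)
    have ihs := ih h0' h1'
    have ha0 : 0 ≤ ε a := h0 a (Finset.mem_cons_self a s)
    have ha1 : ε a ≤ 1 := h1 a (Finset.mem_cons_self a s)
    have hsum0 : 0 ≤ ∑ i ∈ s, ε i := Finset.sum_nonneg h0'
    nlinarith [mul_le_mul_of_nonneg_left ihs (by linarith : (0:ℝ) ≤ 1 - ε a)]

set_option maxHeartbeats 2000000 in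
open Finset in
theorem stmt_6 (d : ℕ) (hd : 1 ≤ d) (h : EuclideanSpace ℝ (Fin d))
    (hnorm : ‖h‖ < Real.sqrt 3 / (2 * d)) (v : EuclideanSpace ℝ (Fin d)) :
    -(∑ i, ∑ j, v i * v j *
        iteratedFDeriv ℝ 2 (Psi1 d) h
          ![EuclideanSpace.single i (1 : ℝ), EuclideanSpace.single j (1 : ℝ)]) ≥
      (23 / 384) * ‖v‖ ^ 2 := by
  have hd1 : (1:ℝ) ≤ (d:ℝ) := by exact_mod_cast hd
  have hs3 : Real.sqrt 3 ≤ 26/15 := by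
    rw [show (26:ℝ)/15 = Real.sqrt ((26/15)^2) from (Real.sqrt_sq (by norm_num)).symm]
    apply Real.sqrt_le_sqrt; norm_num
  have hub2 : ‖h‖ ≤ Real.sqrt 3 / 2 := by
    have h2d : (2:ℝ) ≤ 2 * d := by linarith
    have := div_le_div_of_nonneg_left (Real.sqrt_nonneg 3) (by norm_num : (0:ℝ) < 2) h2d
    linarith [hnorm]
  have hsq34 : ‖h‖^2 ≤ 3/4 := by
    have e := Real.sq_sqrt (by norm_num : (0:ℝ) ≤ 3)
    nlinarith [Real.sqrt_nonneg 3, norm_nonneg h]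
  have hnormsq : ‖h‖^2 = ∑ i, (h i)^2 := by
    have e : ‖h‖^2 = ∑ i, ‖h i‖^2 := by
      rw [EuclideanSpace.norm_eq, Real.sq_sqrt (by positivity)]
    simpa [Real.norm_eq_abs, sq_abs] using e
  have hsumh : ∑ i, (h i)^2 ≤ 3/4 := by rw [← hnormsq]; exact hsq34
  have hhi2 : ∀ i, (h i)^2 ≤ 3/4 := by
    intro i
    have hle : (h i)^2 ≤ ∑ k, (h k)^2 := by
      simpa using
        Finset.single_le_sum (f := fun k => (h k)^2) (fun k _ => sq_nonneg _) (mem_univ i)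
    linarith
  have hhi : ∀ i, |h i| ≤ 13/15 := by
    intro i
    nlinarith [hhi2 i, sq_abs (h i), abs_nonneg (h i), sq_nonneg (|h i| - 13/15)]
  have hvnormsq : ‖v‖^2 = ∑ i, (v i)^2 := by
    have e : ‖v‖^2 = ∑ i, ‖v i‖^2 := by
      rw [EuclideanSpace.norm_eq, Real.sq_sqrt (by positivity)]
    simpa [Real.norm_eq_abs, sq_abs] using e
  -- rewrite entries
  have hrw : (∑ i, ∑ j, v i * v j *
        iteratedFDeriv ℝ 2 (Psi1 d) h
          ![EuclideanSpace.single i (1 : ℝ), EuclideanSpace.single j (1 : ℝ)])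
      = ∑ i, ∑ j, v i * v j * HessEnt d h i j :=
    Finset.sum_congr rfl fun i _ => Finset.sum_congr rfl fun j _ => by
      rw [hessian_entry d h i j]
  rw [hrw]
  -- diagonal entries
  have hEii : ∀ i, HessEnt d h i i = phiDD (h i) * ∏ k ∈ univ.erase i, phi (h k) := by
    intro i
    rw [HessEnt, if_pos rfl]
    congr 1
    exact Finset.prod_congr rfl fun k hk => by
      rw [if_neg (Finset.ne_of_mem_erase hk)]
  -- lower bound for the (d-1)-fold products
  have hP : ∀ i : Fin d, (7733/8000 : ℝ) ≤ ∏ k ∈ univ.erase i, phi (h k) := by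
    intro i
    have heps0 : ∀ k : Fin d, (0:ℝ) ≤ (89/125) * (h k/4)^2 := fun k => by positivity
    have hepssmall : ∀ k : Fin d, (89/125) * (h k/4)^2 ≤ 1 := by
      intro k; nlinarith [hhi2 k]
    have h0 : ∀ k ∈ univ.erase i, (0:ℝ) ≤ 1 - (89/125) * (h k/4)^2 :=
      fun k _ => by linarith [hepssmall k]
    have hstep : ∀ k ∈ univ.erase i, 1 - (89/125) * (h k/4)^2 ≤ phi (h k) :=
      fun k _ => phi_lower (hhi k)
    have e1 := Finset.prod_le_prod h0 hstep
    have e2 := prod_one_sub_ge (univ.erase i) (fun k => (89/125) * (h k/4)^2)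
      (fun k _ => heps0 k) (fun k _ => hepssmall k)
    have e3 : ∑ k ∈ univ.erase i, (89/125) * (h k/4)^2
        ≤ ∑ k : Fin d, (89/125) * (h k/4)^2 :=
      Finset.sum_le_sum_of_subset_of_nonneg (Finset.subset_univ _) (fun k _ _ => heps0 k)
    have e4 : ∑ k : Fin d, (89/125) * (h k/4)^2 = (89/2000) * ∑ k, (h k)^2 := by
      rw [Finset.mul_sum]
      exact Finset.sum_congr rfl fun k _ => by ring
    have e5 : (89/2000 : ℝ) * ∑ k, (h k)^2 ≤ (89/2000) * (3/4) := by
      have := hsumh; nlinarith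
    linarith
  have hDDb : ∀ i, phiDD (h i) ≤ -(1089/16000) := fun i => phiDD_bound (hhi i)
  have hPnn : ∀ i : Fin d, (0:ℝ) ≤ ∏ k ∈ univ.erase i, phi (h k) :=
    fun i => Finset.prod_nonneg fun k _ => phi_nonneg (h k)
  have hdiag : ∀ i, HessEnt d h i i ≤ -(8421237/128000000) := by
    intro i
    rw [hEii i]
    have e1 : phiDD (h i) * ∏ k ∈ univ.erase i, phi (h k)
        ≤ -(1089/16000) * ∏ k ∈ univ.erase i, phi (h k) :=
      mul_le_mul_of_nonneg_right (hDDb i) (hPnn i)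
    have e2 : -(1089/16000 : ℝ) * ∏ k ∈ univ.erase i, phi (h k)
        ≤ -(1089/16000) * (7733/8000) := by nlinarith [hP i]
    calc phiDD (h i) * ∏ k ∈ univ.erase i, phi (h k) ≤ _ := e1
      _ ≤ -(1089/16000) * (7733/8000) := e2
      _ = -(8421237/128000000) := by norm_num
  -- off-diagonal bound
  have hod : ∀ i j : Fin d, i ≠ j → |HessEnt d h i j| ≤ |phiD (h i)| * |phiD (h j)| := by
    intro i j hij
    rw [HessEnt, if_neg hij, abs_mul]
    have hj : j ∈ univ.erase i := Finset.mem_erase.mpr ⟨Ne.symm hij, Finset.mem_univ j⟩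
    have hsplit : ∏ k ∈ univ.erase i, (if k = j then phiD else phi) (h k)
        = phiD (h j) * ∏ k ∈ (univ.erase i).erase j, phi (h k) := by
      rw [← Finset.mul_prod_erase _ _ hj, if_pos rfl]
      congr 1
      exact Finset.prod_congr rfl fun k hk => by rw [if_neg (Finset.ne_of_mem_erase hk)]
    rw [hsplit, abs_mul]
    have hQ : |∏ k ∈ (univ.erase i).erase j, phi (h k)| ≤ 1 := by
      rw [abs_of_nonneg (Finset.prod_nonneg fun k _ => phi_nonneg _)]
      exact Finset.prod_le_one (fun k _ => phi_nonneg _) (fun k _ => phi_le_one (hhi k))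
    have h1 : |phiD (h j)| * |∏ k ∈ (univ.erase i).erase j, phi (h k)| ≤ |phiD (h j)| :=
      mul_le_of_le_one_right (abs_nonneg _) hQ
    exact mul_le_mul_of_nonneg_left h1 (abs_nonneg _)
  have hoffpt : ∀ i j : Fin d, i ≠ j → v i * v j * HessEnt d h i j
      ≤ (|v i| * ((7/80) * |h i|)) * (|v j| * ((7/80) * |h j|)) := by
    intro i j hij
    have h1 : v i * v j * HessEnt d h i j ≤ |v i * v j * HessEnt d h i j| := le_abs_self _
    have h2 : |v i * v j * HessEnt d h i j| = |v i| * |v j| * |HessEnt d h i j| := by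
      rw [abs_mul, abs_mul]
    have h3 : |HessEnt d h i j| ≤ ((7/80) * |h i|) * ((7/80) * |h j|) := by
      calc |HessEnt d h i j| ≤ |phiD (h i)| * |phiD (h j)| := hod i j hij
        _ ≤ ((7/80) * |h i|) * ((7/80) * |h j|) :=
            mul_le_mul (phiD_bound (hhi i)) (phiD_bound (hhi j)) (abs_nonneg _) (by positivity)
    have h4 : |v i| * |v j| * |HessEnt d h i j|
        ≤ |v i| * |v j| * (((7/80) * |h i|) * ((7/80) * |h j|)) :=
      mul_le_mul_of_nonneg_left h3 (by positivity)
    calc v i * v j * HessEnt d h i j ≤ |v i| * |v j| * |HessEnt d h i j| := by rw [← h2]; exact h1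
      _ ≤ |v i| * |v j| * (((7/80) * |h i|) * ((7/80) * |h j|)) := h4
      _ = (|v i| * ((7/80) * |h i|)) * (|v j| * ((7/80) * |h j|)) := by ring
  have hv0 : (0:ℝ) ≤ ∑ i, (v i)^2 := Finset.sum_nonneg fun i _ => sq_nonneg _
  have hoff : ∑ i, ∑ j ∈ univ.erase i, v i * v j * HessEnt d h i j
      ≤ (147/25600) * ∑ i, (v i)^2 := by
    have s1 : ∑ i, ∑ j ∈ univ.erase i, v i * v j * HessEnt d h i j
        ≤ ∑ i, ∑ j ∈ univ.erase i, (|v i| * ((7/80) * |h i|)) * (|v j| * ((7/80) * |h j|)) :=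
      Finset.sum_le_sum fun i _ => Finset.sum_le_sum fun j hj =>
        hoffpt i j (Ne.symm (Finset.ne_of_mem_erase hj))
    have s2 : ∑ i, ∑ j ∈ univ.erase i, (|v i| * ((7/80) * |h i|)) * (|v j| * ((7/80) * |h j|))
        ≤ ∑ i, ∑ j : Fin d, (|v i| * ((7/80) * |h i|)) * (|v j| * ((7/80) * |h j|)) :=
      Finset.sum_le_sum fun i _ =>
        Finset.sum_le_sum_of_subset_of_nonneg (Finset.subset_univ _)
          (fun j _ _ => by positivity)
    have s3 : ∑ i, ∑ j : Fin d, (|v i| * ((7/80) * |h i|)) * (|v j| * ((7/80) * |h j|))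
        = (∑ i, |v i| * ((7/80) * |h i|))^2 := by
      rw [sq, Finset.sum_mul_sum]
    have s4 := Finset.sum_mul_sq_le_sq_mul_sq univ (fun i => |v i|) (fun i => (7/80) * |h i|)
    have s5 : ∑ i, (|v i|:ℝ)^2 = ∑ i, (v i)^2 := Finset.sum_congr rfl fun i _ => sq_abs _
    have s6 : ∑ i, ((7/80) * |h i|)^2 = (49/6400) * ∑ i, (h i)^2 := by
      rw [Finset.mul_sum]
      exact Finset.sum_congr rfl fun i _ => by rw [mul_pow, sq_abs]; ring
    have s7 : (∑ i, |v i| * ((7/80) * |h i|))^2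
        ≤ (∑ i, (v i)^2) * ((49/6400) * (3/4)) := by
      calc (∑ i, |v i| * ((7/80) * |h i|))^2
          ≤ (∑ i, (|v i|:ℝ)^2) * ∑ i, ((7/80) * |h i|)^2 := s4
        _ = (∑ i, (v i)^2) * ((49/6400) * ∑ i, (h i)^2) := by rw [s5, s6]
        _ ≤ (∑ i, (v i)^2) * ((49/6400) * (3/4)) := by
            apply mul_le_mul_of_nonneg_left _ hv0
            nlinarith
    calc ∑ i, ∑ j ∈ univ.erase i, v i * v j * HessEnt d h i j
        ≤ ∑ i, ∑ j ∈ univ.erase i, (|v i| * ((7/80) * |h i|)) * (|v j| * ((7/80) * |h j|)) := s1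
      _ ≤ ∑ i, ∑ j : Fin d, (|v i| * ((7/80) * |h i|)) * (|v j| * ((7/80) * |h j|)) := s2
      _ = (∑ i, |v i| * ((7/80) * |h i|))^2 := s3
      _ ≤ (∑ i, (v i)^2) * ((49/6400) * (3/4)) := s7
      _ = (147/25600) * ∑ i, (v i)^2 := by ring
  have hsplit : ∑ i, ∑ j, v i * v j * HessEnt d h i j
      = (∑ i, v i * v i * HessEnt d h i i)
        + ∑ i, ∑ j ∈ univ.erase i, v i * v j * HessEnt d h i j := by
    rw [← Finset.sum_add_distrib]
    exact Finset.sum_congr rfl fun i _ =>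
      (Finset.add_sum_erase _ (fun j => v i * v j * HessEnt d h i j) (mem_univ i)).symm
  have hdiagsum : ∑ i, v i * v i * HessEnt d h i i
      ≤ -(8421237/128000000) * ∑ i, (v i)^2 := by
    rw [Finset.mul_sum]
    apply Finset.sum_le_sum
    intro i _
    calc v i * v i * HessEnt d h i i = (v i)^2 * HessEnt d h i i := by ring
      _ ≤ (v i)^2 * (-(8421237/128000000)) :=
          mul_le_mul_of_nonneg_left (hdiag i) (sq_nonneg _)
      _ = -(8421237/128000000) * (v i)^2 := by ring
  rw [hsplit, hvnormsq, ge_iff_le]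
  have hfin : (23/384 : ℝ) * ∑ i, (v i)^2
      ≤ (8421237/128000000) * (∑ i, (v i)^2) - (147/25600) * ∑ i, (v i)^2 := by
    nlinarith
  linarith
end

section
/- For every integer n ≥ 1 and every x ∈ ℝ, the n-th derivative of sinc satisfies |sinc⁽ⁿ⁾(x)| ≤ 1/2. -/
open Real hiding sinc
open MeasureTheory intervalIntegral Metric

noncomputable def sincAux (n : ℕ) (x : ℝ) : ℝ :=
  ∫ t in (0:ℝ)..1, t ^ n * Real.cos (x * t + n * (Real.pi / 2))

lemma sincAux_zero : sincAux 0 = sinc := by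
  funext x
  simp only [sincAux, pow_zero, one_mul, Nat.cast_zero, zero_mul, add_zero, sinc]
  rcases eq_or_ne x 0 with h | h
  · simp [h]
  · rw [if_neg h]
    have := intervalIntegral.integral_comp_mul_left (fun t => Real.cos t) (c := x) (a := 0) (b := 1)
    simp only [mul_zero, mul_one] at this
    rw [show (fun t => Real.cos (x * t)) = (fun t => (fun u => Real.cos u) (x * t)) from rfl, this h]
    simp [integral_cos, div_eq_inv_mul]

lemma hasDerivAt_sincAux (n : ℕ) (x : ℝ) :
    HasDerivAt (sincAux n) (sincAux (n + 1) x) x := by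
  have key := intervalIntegral.hasDerivAt_integral_of_dominated_loc_of_deriv_le
    (F := fun (y : ℝ) (t : ℝ) => t ^ n * Real.cos (y * t + n * (Real.pi / 2)))
    (F' := fun (y : ℝ) (t : ℝ) => t ^ (n + 1) * Real.cos (y * t + (n + 1) * (Real.pi / 2)))
    (x₀ := x) (a := 0) (b := 1) (μ := volume) (bound := fun _ => 1)
    (s := Metric.ball x 1) (Metric.ball_mem_nhds x one_pos)
    (Filter.Eventually.of_forall fun y =>
      (Continuous.aestronglyMeasurable (by continuity)).restrict)
    (Continuous.intervalIntegrable (by continuity) 0 1)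
    (Continuous.aestronglyMeasurable (by continuity)).restrict
    (Filter.Eventually.of_forall fun t ht y _ => ?_)
    (Continuous.intervalIntegrable continuous_const 0 1)
    (Filter.Eventually.of_forall fun t ht y _ => ?_)
  · have heq : (∫ t in (0:ℝ)..1, t ^ (n + 1) * Real.cos (x * t + (n + 1) * (Real.pi / 2)))
        = sincAux (n + 1) x := by
      simp [sincAux]
    rw [heq] at key
    exact key.2
  · -- bound
    rw [Set.uIoc_of_le (by norm_num : (0:ℝ) ≤ 1)] at ht
    have h1 : |t ^ (n + 1)| ≤ 1 := by
      rw [abs_pow]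
      exact pow_le_one₀ (abs_nonneg t) (by rw [abs_of_pos ht.1]; exact ht.2)
    calc ‖t ^ (n + 1) * Real.cos (y * t + (n + 1) * (Real.pi / 2))‖
        = |t ^ (n + 1)| * |Real.cos (y * t + (n + 1) * (Real.pi / 2))| := abs_mul _ _
      _ ≤ 1 * 1 := mul_le_mul h1 (Real.abs_cos_le_one _) (abs_nonneg _) one_pos.le
      _ = 1 := one_mul 1
  · -- differentiability
    have h : HasDerivAt (fun y : ℝ => y * t + n * (Real.pi / 2)) t y := by
      simpa using ((hasDerivAt_id y).mul_const t).add_const (n * (Real.pi / 2))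
    have h2 := ((Real.hasDerivAt_cos _).comp y h).const_mul ((t:ℝ) ^ n)
    convert h2 using 1
    · rfl
    · rfl
    have : Real.cos (y * t + (↑n + 1) * (Real.pi / 2))
        = -Real.sin (y * t + n * (Real.pi / 2)) := by
      rw [show (↑n + 1) * (Real.pi / 2) = ↑n * (Real.pi / 2) + Real.pi / 2 by ring,
        ← add_assoc, Real.cos_add_pi_div_two]
    push_cast
    rw [this]
    ring

lemma iteratedDeriv_sinc (n : ℕ) : iteratedDeriv n sinc = sincAux n := by
  induction n with
  | zero => simpa using sincAux_zero.symm
  | succ k ih =>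
    rw [iteratedDeriv_succ, ih]
    funext y
    exact (hasDerivAt_sincAux k y).deriv

theorem stmt_11 (n : ℕ) (hn : 1 ≤ n) (x : ℝ) :
    |iteratedDeriv n sinc x| ≤ 1 / 2 := by
  rw [iteratedDeriv_sinc]
  have h1 : |sincAux n x| ≤ ∫ t in (0:ℝ)..1, t ^ n := by
    rw [← Real.norm_eq_abs]
    calc ‖sincAux n x‖ ≤ ∫ t in (0:ℝ)..1, ‖t ^ n * Real.cos (x * t + n * (Real.pi / 2))‖ :=
          intervalIntegral.norm_integral_le_integral_norm (by norm_num)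
      _ ≤ ∫ t in (0:ℝ)..1, t ^ n := by
          apply intervalIntegral.integral_mono_on (by norm_num)
          · exact (Continuous.intervalIntegrable (by continuity) 0 1)
          · exact (Continuous.intervalIntegrable (by continuity) 0 1)
          intro t ht
          calc ‖t ^ n * Real.cos (x * t + n * (Real.pi / 2))‖
              = |t ^ n| * |Real.cos (x * t + n * (Real.pi / 2))| := abs_mul _ _
            _ ≤ t ^ n * 1 := mul_le_mul (le_of_eq (abs_of_nonneg (pow_nonneg ht.1 n)))
                (Real.abs_cos_le_one _) (abs_nonneg _) (pow_nonneg ht.1 n)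
            _ = t ^ n := mul_one _
  have h2 : (∫ t in (0:ℝ)..1, t ^ n) = 1 / (n + 1) := by
    rw [integral_pow]; norm_num
  rw [h2] at h1
  refine h1.trans ?_
  have hn' : (2:ℝ) ≤ (n:ℝ) + 1 := by
    have : (1:ℝ) ≤ n := by exact_mod_cast hn
    linarith
  exact one_div_le_one_div_of_le (by norm_num) hn'
end
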